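/- arXiv:1302.0602 — 2 statements merged into one kernel-verified Lean document; each statement's English description precedes it below -/
import Mathlib

section
/- Let R be a commutative Bézout domain with the IP₂ property (every 2×2 matrix over R with determinant 0 is a product of idempotent matrices). Then every invertible 2×2 matrix over R is a product of elementary matrices and diagonal matrices with unit diagonal entries; i.e., every element of GL₂(R) lies in the subgroup of GL₂(R) generated by the elementary matrices I + c·eᵢⱼ (c ∈ R, i ≠ j) and the diagonal matrices diag(u, v) with u, v units of R. -/
open Matrix


section Helpers
variable {R : Type*} [CommRing R]

/-- Elementary transvection as a unit of the 2×2 matrix ring. -/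
def elemU (i j : Fin 2) (hij : i ≠ j) (c : R) : (Matrix (Fin 2) (Fin 2) R)ˣ where
  val := 1 + Matrix.single i j c
  inv := 1 + Matrix.single i j (-c)
  val_inv := by
    rw [mul_add, add_mul, add_mul, mul_one, one_mul, mul_one,
      Matrix.single_mul_single_of_ne (h := hij.symm), add_zero, add_assoc,
      ← Matrix.single_add]
    simp
  inv_val := by
    rw [mul_add, add_mul, add_mul, mul_one, one_mul, mul_one,
      Matrix.single_mul_single_of_ne (h := hij.symm), add_zero, add_assoc,
      ← Matrix.single_add]
    simp

/-- Diagonal matrix with unit entries as a unit of the 2×2 matrix ring. -/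
def diagU (u v : Rˣ) : (Matrix (Fin 2) (Fin 2) R)ˣ where
  val := Matrix.diagonal ![(u : R), (v : R)]
  inv := Matrix.diagonal ![((u⁻¹ : Rˣ) : R), ((v⁻¹ : Rˣ) : R)]
  val_inv := by
    ext i j
    rw [Matrix.diagonal_mul_diagonal]
    fin_cases i <;> fin_cases j <;> simp [Matrix.diagonal, Matrix.one_apply]
  inv_val := by
    ext i j
    rw [Matrix.diagonal_mul_diagonal]
    fin_cases i <;> fin_cases j <;> simp [Matrix.diagonal, Matrix.one_apply]

end Helpers


section Step
variable {R : Type*} [CommRing R]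

lemma vecMul_two (v : Fin 2 → R) (M : Matrix (Fin 2) (Fin 2) R) (j : Fin 2) :
    Matrix.vecMul v M j = v 0 * M 0 j + v 1 * M 1 j := by
  simp [Matrix.vecMul, dotProduct, Fin.sum_univ_two]

lemma step_lemma
    (elemU : ∀ (i j : Fin 2), i ≠ j → R → (Matrix (Fin 2) (Fin 2) R)ˣ)
    (helemv : ∀ i j h c, (elemU i j h c).val = 1 + Matrix.single i j c)
    (diagU : Rˣ → Rˣ → (Matrix (Fin 2) (Fin 2) R)ˣ)
    (hdiagv : ∀ u v, (diagU u v).val = Matrix.diagonal ![(u : R), (v : R)])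
    (G : Subgroup (Matrix (Fin 2) (Fin 2) R)ˣ)
    (helem : ∀ (i j : Fin 2) (h : i ≠ j) (c : R), elemU i j h c ∈ G)
    (hdiag : ∀ u v : Rˣ, diagU u v ∈ G)
    (z w p : Fin 2 → R) (u : Rˣ)
    (hu : z 0 * p 0 + z 1 * p 1 = (u : R))
    (hw : w 0 * p 0 + w 1 * p 1 = 1)
    (Q : (Matrix (Fin 2) (Fin 2) R)ˣ) (hQ : Q ∈ G)
    (hz : Matrix.vecMul z Q.val = ![1, 0]) :
    ∃ Q' ∈ G, Matrix.vecMul w Q'.val = ![1, 0] := by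
  classical
  set pt : Fin 2 → R := Matrix.mulVec (Q⁻¹).val p with hpt
  have hdot : ∀ v : Fin 2 → R,
      (Matrix.vecMul v Q.val) ⬝ᵥ pt = v 0 * p 0 + v 1 * p 1 := by
    intro v
    rw [hpt, Matrix.dotProduct_mulVec, Matrix.vecMul_vecMul, ← Units.val_mul,
      mul_inv_cancel, Units.val_one, Matrix.vecMul_one]
    simp [dotProduct, Fin.sum_univ_two]
  have hpt0 : pt 0 = (u : R) := by
    have h' := hdot z
    rw [hz, hu] at h'
    simpa [dotProduct, Fin.sum_univ_two] using h'
  set v : Fin 2 → R := Matrix.vecMul w Q.val with hvdef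
  have hv : v 0 * (u : R) + v 1 * pt 1 = 1 := by
    have h' := hdot w
    rw [hw] at h'
    rw [← hvdef] at h'
    rw [dotProduct, Fin.sum_univ_two, hpt0] at h'
    exact h'
  have huu : ((u⁻¹ : Rˣ) : R) * (u : R) = 1 := Units.inv_mul u
  have h1 : Matrix.vecMul v (elemU 1 0 (by decide) (pt 1 * ((u⁻¹ : Rˣ) : R))).val
      = ![((u⁻¹ : Rˣ) : R), v 1] := by
    rw [helemv]
    funext j
    fin_cases j <;>
      simp [vecMul_two, Matrix.single, Matrix.one_apply]
    linear_combination ((u⁻¹ : Rˣ) : R) * hv - v 0 * huu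
  have h2 : Matrix.vecMul ![((u⁻¹ : Rˣ) : R), v 1] (diagU u⁻¹⁻¹ 1).val = ![1, v 1] := by
    rw [hdiagv]
    funext j
    fin_cases j <;>
      simp [vecMul_two, Matrix.diagonal, huu]
  have h3 : Matrix.vecMul ![1, v 1] (elemU 0 1 (by decide) (-(v 1))).val = ![1, 0] := by
    rw [helemv]
    funext j
    fin_cases j <;>
      simp [vecMul_two, Matrix.single, Matrix.one_apply]
  refine ⟨Q * elemU 1 0 (by decide) (pt 1 * ((u⁻¹ : Rˣ) : R)) * diagU u⁻¹⁻¹ 1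
      * elemU 0 1 (by decide) (-(v 1)),
    mul_mem (mul_mem (mul_mem hQ (helem _ _ _ _)) (hdiag _ _)) (helem _ _ _ _), ?_⟩
  rw [Units.val_mul, Units.val_mul, Units.val_mul,
    ← Matrix.vecMul_vecMul, ← Matrix.vecMul_vecMul, ← Matrix.vecMul_vecMul,
    ← hvdef, h1, h2, h3]

end Step

section Struct
variable {R : Type*} [CommRing R] [IsDomain R] [IsBezout R]

lemma bezout_pair (e f : R) :
    ∃ d r s x y : R, e = d * r ∧ f = d * s ∧ r * x + s * y = 1 := by
  by_cases h0 : e = 0 ∧ f = 0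
  · exact ⟨0, 1, 0, 1, 0, by simp [h0.1], by simp [h0.2], by ring⟩
  · obtain ⟨r, hr⟩ := IsBezout.gcd_dvd_left e f
    obtain ⟨s, hs⟩ := IsBezout.gcd_dvd_right e f
    obtain ⟨x, y, hxy⟩ := IsBezout.gcd_eq_sum e f
    have hdne : IsBezout.gcd e f ≠ 0 := by
      intro h
      exact h0 ⟨by rw [hr, h, zero_mul], by rw [hs, h, zero_mul]⟩
    refine ⟨IsBezout.gcd e f, r, s, x, y, hr, hs, ?_⟩
    apply mul_left_cancel₀ hdne
    rw [mul_one]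
    calc IsBezout.gcd e f * (r * x + s * y)
        = x * (IsBezout.gcd e f * r) + y * (IsBezout.gcd e f * s) := by ring
      _ = IsBezout.gcd e f := by rw [← hr, ← hs]; exact hxy

lemma idem_struct (E : Matrix (Fin 2) (Fin 2) R) (hE : E * E = E) :
    E = 1 ∨ E = 0 ∨ ∃ p w : Fin 2 → R,
      (∀ i j, E i j = p i * w j) ∧ (w 0 * p 0 + w 1 * p 1 = 1) := by
  by_cases h1 : E = 1
  · exact Or.inl h1
  by_cases h0 : E = 0
  · exact Or.inr (Or.inl h0)
  right; right
  have hent : ∀ i j, E i 0 * E 0 j + E i 1 * E 1 j = E i j := by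
    intro i j
    have := congrFun (congrFun hE i) j
    rwa [Matrix.mul_apply, Fin.sum_univ_two] at this
  have e1 : E 0 0 * E 0 0 + E 0 1 * E 1 0 = E 0 0 := hent 0 0
  have e2 : E 0 0 * E 0 1 + E 0 1 * E 1 1 = E 0 1 := hent 0 1
  have e3 : E 1 0 * E 0 0 + E 1 1 * E 1 0 = E 1 0 := hent 1 0
  have e4 : E 1 0 * E 0 1 + E 1 1 * E 1 1 = E 1 1 := hent 1 1
  -- trace is 1
  have key : E 0 0 + E 1 1 = 1 := by
    by_contra ht
    have hsub : E 0 0 + E 1 1 - 1 ≠ 0 := fun hc => ht (by linear_combination hc)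
    have hf0 : E 0 1 = 0 := by
      have : E 0 1 * (E 0 0 + E 1 1 - 1) = 0 := by linear_combination e2
      exact (mul_eq_zero.mp this).resolve_right hsub
    have hg0 : E 1 0 = 0 := by
      have : E 1 0 * (E 0 0 + E 1 1 - 1) = 0 := by linear_combination e3
      exact (mul_eq_zero.mp this).resolve_right hsub
    have heh : E 0 0 = E 1 1 := by
      have h5 : (E 0 0 - E 1 1) * (E 0 0 + E 1 1 - 1) = 0 := by
        linear_combination e1 - e4
      have := (mul_eq_zero.mp h5).resolve_right hsub
      linear_combination this
    have he01 : E 0 0 * (E 0 0 - 1) = 0 := by linear_combination e1 - E 1 0 * hf0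
    rcases mul_eq_zero.mp he01 with h' | h'
    · apply h0
      ext i j
      fin_cases i <;> fin_cases j
      · exact h'
      · exact hf0
      · exact hg0
      · show E 1 1 = 0
        rw [← heh]; exact h'
    · have he1 : E 0 0 = 1 := by linear_combination h'
      apply h1
      ext i j
      fin_cases i <;> fin_cases j
      · show E 0 0 = (1 : Matrix (Fin 2) (Fin 2) R) 0 0
        rw [Matrix.one_apply_eq]; exact he1
      · show E 0 1 = (1 : Matrix (Fin 2) (Fin 2) R) 0 1
        rw [Matrix.one_apply_ne (by decide)]; exact hf0
      · show E 1 0 = (1 : Matrix (Fin 2) (Fin 2) R) 1 0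
        rw [Matrix.one_apply_ne (by decide)]; exact hg0
      · show E 1 1 = (1 : Matrix (Fin 2) (Fin 2) R) 1 1
        rw [Matrix.one_apply_eq, ← heh]; exact he1
  have det0 : E 0 0 * E 1 1 = E 0 1 * E 1 0 := by
    linear_combination E 0 0 * key - e1
  obtain ⟨d, r, s, x, y, hdr, hds, hrs⟩ := bezout_pair (E 0 0) (E 0 1)
  by_cases hef : E 0 0 = 0 ∧ E 0 1 = 0
  · -- E = [[0,0],[g,1]]
    have hh1 : E 1 1 = 1 := by rw [← key, hef.1, zero_add]
    refine ⟨![0, 1], ![E 1 0, 1], ?_, by simp⟩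
    intro i j
    fin_cases i <;> fin_cases j
    · show E 0 0 = 0 * E 1 0; rw [hef.1, zero_mul]
    · show E 0 1 = 0 * 1; rw [hef.2, zero_mul]
    · show E 1 0 = 1 * E 1 0; rw [one_mul]
    · show E 1 1 = 1 * 1; rw [hh1, one_mul]
  · have hdne : d ≠ 0 := by
      intro hc
      exact hef ⟨by rw [hdr, hc, zero_mul], by rw [hds, hc, zero_mul]⟩
    have hrh : r * E 1 1 = s * E 1 0 := by
      apply mul_left_cancel₀ hdne
      calc d * (r * E 1 1) = (d * r) * E 1 1 := by ring
        _ = E 0 0 * E 1 1 := by rw [← hdr]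
        _ = E 0 1 * E 1 0 := det0
        _ = d * (s * E 1 0) := by rw [hds]; ring
    refine ⟨![d, E 1 0 * x + E 1 1 * y], ![r, s], ?_, ?_⟩
    · intro i j
      fin_cases i <;> fin_cases j
      · show E 0 0 = d * r; exact hdr
      · show E 0 1 = d * s; exact hds
      · show E 1 0 = (E 1 0 * x + E 1 1 * y) * r
        linear_combination (-(E 1 0)) * hrs - y * hrh
      · show E 1 1 = (E 1 0 * x + E 1 1 * y) * s
        linear_combination (-(E 1 1)) * hrs + x * hrh
    · show r * d + s * (E 1 0 * x + E 1 1 * y) = 1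
      calc r * d + s * (E 1 0 * x + E 1 1 * y)
          = (d * r) + (s * E 1 0) * x + (s * E 1 1) * y := by ring
        _ = E 0 0 + (r * E 1 1) * x + (s * E 1 1) * y := by rw [← hdr, ← hrh]
        _ = E 0 0 + E 1 1 * (r * x + s * y) := by ring
        _ = E 0 0 + E 1 1 := by rw [hrs, mul_one]
        _ = 1 := key

end Struct

section Reduce
variable {R : Type*} [CommRing R] [IsDomain R] [IsBezout R]

lemma reduce_lemma
    (elemU : ∀ (i j : Fin 2), i ≠ j → R → (Matrix (Fin 2) (Fin 2) R)ˣ)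
    (helemv : ∀ i j h c, (elemU i j h c).val = 1 + Matrix.single i j c)
    (diagU : Rˣ → Rˣ → (Matrix (Fin 2) (Fin 2) R)ˣ)
    (hdiagv : ∀ u v, (diagU u v).val = Matrix.diagonal ![(u : R), (v : R)])
    (G : Subgroup (Matrix (Fin 2) (Fin 2) R)ˣ)
    (helem : ∀ (i j : Fin 2) (h : i ≠ j) (c : R), elemU i j h c ∈ G)
    (hdiag : ∀ u v : Rˣ, diagU u v ∈ G) :
    ∀ (l : List (Matrix (Fin 2) (Fin 2) R)), (∀ E ∈ l, E * E = E) →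
    ∀ (z : Fin 2 → R),
      (∃ Q ∈ G, Matrix.vecMul z Q.val = ![1, 0]) →
    ∀ (a b x y : R), a * x + b * y = 1 →
      Matrix.vecMul z l.prod = ![a, b] →
    ∃ Q ∈ G, Matrix.vecMul ![a, b] Q.val = ![1, 0] := by
  intro l
  induction l with
  | nil =>
    intro _ z hz a b x y hxy hab
    obtain ⟨Q, hQ, hQz⟩ := hz
    rw [List.prod_nil, Matrix.vecMul_one] at hab
    rw [← hab]
    exact ⟨Q, hQ, hQz⟩
  | cons E l ih =>
    intro hidem z hz a b x y hxy hab
    have hEi : E * E = E := hidem E List.mem_cons_self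
    have hidem' : ∀ F ∈ l, F * F = F := fun F hF => hidem F (List.mem_cons_of_mem E hF)
    rw [List.prod_cons, ← Matrix.vecMul_vecMul] at hab
    rcases idem_struct E hEi with h1 | h0 | ⟨p, w, hpw, hwp⟩
    · -- E = 1
      rw [h1, Matrix.vecMul_one] at hab
      exact ih hidem' z hz a b x y hxy hab
    · -- E = 0 : contradiction with unimodularity
      exfalso
      rw [h0] at hab
      have hz0 : Matrix.vecMul z (0 : Matrix (Fin 2) (Fin 2) R) = 0 := by
        funext j; simp [vecMul_two]
      rw [hz0] at hab
      have hv0 : Matrix.vecMul (0 : Fin 2 → R) l.prod = 0 := by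
        funext j; simp [vecMul_two]
      rw [hv0] at hab
      have ha : a = 0 := by
        have := congrFun hab 0; simp at this; exact this.symm
      have hb : b = 0 := by
        have := congrFun hab 1; simp at this; exact this.symm
      rw [ha, hb] at hxy
      simp at hxy
    · -- E = p wᵀ
      set u : R := z 0 * p 0 + z 1 * p 1 with hu
      have hzE : Matrix.vecMul z E = u • w := by
        funext j
        rw [vecMul_two, hpw 0 j, hpw 1 j]
        simp only [Pi.smul_apply, smul_eq_mul, hu]
        ring
      rw [hzE] at hab
      have hsmul : Matrix.vecMul (u • w) l.prod = u • Matrix.vecMul w l.prod := by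
        funext j
        simp [vecMul_two, smul_eq_mul]
        ring
      rw [hsmul] at hab
      set a' : R := Matrix.vecMul w l.prod 0 with ha'
      set b' : R := Matrix.vecMul w l.prod 1 with hb'
      have haa : a = u * a' := by
        have := congrFun hab 0; simp [smul_eq_mul] at this
        rw [← ha'] at this
        exact this.symm
      have hbb : b = u * b' := by
        have := congrFun hab 1; simp [smul_eq_mul] at this
        rw [← hb'] at this
        exact this.symm
      have huunit : IsUnit u := by
        apply IsUnit.of_mul_eq_one (a := u) (a' * x + b' * y)
        linear_combination hxy - x * haa - y * hbb
      obtain ⟨uu, huu⟩ := huunit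
      obtain ⟨Q, hQ, hQz⟩ := hz
      obtain ⟨Q1, hQ1, hQ1w⟩ := step_lemma elemU helemv diagU hdiagv G helem hdiag
        z w p uu (by rw [huu, hu]) hwp Q hQ hQz
      have hab' : Matrix.vecMul w l.prod = ![a', b'] := by
        funext j; fin_cases j
        · exact ha'.symm ▸ rfl
        · exact hb'.symm ▸ rfl
      obtain ⟨Q2, hQ2, hQ2ab⟩ := ih hidem' w ⟨Q1, hQ1, hQ1w⟩ a' b' (x * u) (y * u)
        (by linear_combination hxy - x * haa - y * hbb) hab'
      refine ⟨diagU uu⁻¹ uu⁻¹ * Q2, mul_mem (hdiag _ _) hQ2, ?_⟩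
      rw [Units.val_mul, ← Matrix.vecMul_vecMul]
      have hcan : ∀ c c' : R, c = u * c' → c * ((uu⁻¹ : Rˣ) : R) = c' := by
        intro c c' hc
        rw [hc, ← huu]
        calc (uu : R) * c' * ((uu⁻¹ : Rˣ) : R)
            = c' * ((uu : R) * ((uu⁻¹ : Rˣ) : R)) := by ring
          _ = c' := by rw [Units.mul_inv, mul_one]
      have hd : Matrix.vecMul ![a, b] (diagU uu⁻¹ uu⁻¹).val = ![a', b'] := by
        rw [hdiagv]
        funext j
        fin_cases j <;> simp [vecMul_two, Matrix.diagonal]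
        · exact hcan a a' haa
        · exact hcan b b' hbb
      rw [hd, hQ2ab]

end Reduce




/-- A commutative Bézout domain with the IP₂ property has the GE₂ property:
every invertible `2 × 2` matrix lies in the subgroup generated by elementary
matrices and diagonal matrices with unit diagonal entries. -/
theorem GE2_of_bezout_IP2
    (R : Type*) [CommRing R] [IsDomain R] [IsBezout R]
    (hIP2 : ∀ A : Matrix (Fin 2) (Fin 2) R, A.det = 0 →
      ∃ l : List (Matrix (Fin 2) (Fin 2) R), (∀ E ∈ l, E * E = E) ∧ A = l.prod) :
    ∀ M : (Matrix (Fin 2) (Fin 2) R)ˣ,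
      M ∈ Subgroup.closure
        {N : (Matrix (Fin 2) (Fin 2) R)ˣ |
          (∃ (i j : Fin 2) (c : R), i ≠ j ∧
            N.val = 1 + Matrix.single i j c) ∨
          (∃ u v : Rˣ,
            N.val = Matrix.diagonal ![(u : R), (v : R)])} := by
  intro M
  set S : Set (Matrix (Fin 2) (Fin 2) R)ˣ :=
    {N : (Matrix (Fin 2) (Fin 2) R)ˣ |
      (∃ (i j : Fin 2) (c : R), i ≠ j ∧
        N.val = 1 + Matrix.single i j c) ∨
      (∃ u v : Rˣ, N.val = Matrix.diagonal ![(u : R), (v : R)])} with hS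
  set G : Subgroup (Matrix (Fin 2) (Fin 2) R)ˣ := Subgroup.closure S with hG
  have helem : ∀ (i j : Fin 2) (h : i ≠ j) (c : R), elemU i j h c ∈ G :=
    fun i j h c => Subgroup.subset_closure (Or.inl ⟨i, j, c, h, rfl⟩)
  have hdiag : ∀ u v : Rˣ, diagU u v ∈ G :=
    fun u v => Subgroup.subset_closure (Or.inr ⟨u, v, rfl⟩)
  -- the first row of M is unimodular
  obtain ⟨Δ, hΔ⟩ := (Matrix.isUnit_iff_isUnit_det M.val).mp M.isUnit
  have hdet : M.val 0 0 * M.val 1 1 - M.val 0 1 * M.val 1 0 = (Δ : R) := by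
    rw [hΔ, Matrix.det_fin_two]
  have hmul : (Δ : R) * ((Δ⁻¹ : Rˣ) : R) = 1 := Units.mul_inv Δ
  have hxy : M.val 0 0 * (M.val 1 1 * ((Δ⁻¹ : Rˣ) : R))
      + M.val 0 1 * (-(M.val 1 0 * ((Δ⁻¹ : Rˣ) : R))) = 1 := by
    linear_combination ((Δ⁻¹ : Rˣ) : R) * hdet + hmul
  -- the singular matrix with first row that of M
  set A : Matrix (Fin 2) (Fin 2) R := Matrix.of ![![M.val 0 0, M.val 0 1], ![0, 0]]
    with hA
  have hAdet : A.det = 0 := by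
    rw [Matrix.det_fin_two]
    show M.val 0 0 * 0 - M.val 0 1 * 0 = 0
    ring
  obtain ⟨l, hidem, hprod⟩ := hIP2 A hAdet
  have hvA : Matrix.vecMul ![(1 : R), 0] l.prod = ![M.val 0 0, M.val 0 1] := by
    rw [← hprod]
    funext j
    fin_cases j <;> simp [vecMul_two, hA]
  obtain ⟨Q, hQ, hQab⟩ := reduce_lemma (R := R) elemU (fun _ _ _ _ => rfl)
    diagU (fun _ _ => rfl) G helem hdiag l hidem ![(1 : R), 0]
    ⟨1, one_mem G, by rw [Units.val_one, Matrix.vecMul_one]⟩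
    (M.val 0 0) (M.val 0 1) _ _ hxy hvA
  -- M * Q is lower triangular with (1,1)-entry 1
  have hN0 : ∀ j, (M * Q).val 0 j = ![(1 : R), 0] j := by
    intro j
    have h1 : (M * Q).val 0 j
        = M.val 0 0 * Q.val 0 j + M.val 0 1 * Q.val 1 j := by
      rw [Units.val_mul, Matrix.mul_apply, Fin.sum_univ_two]
    rw [h1, ← hQab, vecMul_two]
    simp
  obtain ⟨δ, hδ⟩ : IsUnit ((M * Q).val 1 1) := by
    have := (Matrix.isUnit_iff_isUnit_det (M * Q).val).mp (M * Q).isUnit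
    rw [Matrix.det_fin_two, hN0 0, hN0 1] at this
    simpa using this
  have hfact : M * Q = elemU 1 0 (by decide) ((M * Q).val 1 0) * diagU 1 δ := by
    apply Units.ext
    rw [Units.val_mul]
    funext i j
    fin_cases i <;> fin_cases j
    · show (M * Q).val 0 0 = _
      rw [hN0 0]
      simp [elemU, diagU, Matrix.mul_apply, Fin.sum_univ_two,
        Matrix.single, Matrix.one_apply, Matrix.diagonal]
    · show (M * Q).val 0 1 = _
      rw [hN0 1]
      simp [elemU, diagU, Matrix.mul_apply, Fin.sum_univ_two,
        Matrix.single, Matrix.one_apply, Matrix.diagonal]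
    · show (M * Q).val 1 0 = _
      simp [elemU, diagU, Matrix.mul_apply, Fin.sum_univ_two,
        Matrix.single, Matrix.one_apply, Matrix.diagonal]
    · show (M * Q).val 1 1 = _
      rw [← hδ]
      simp [elemU, diagU, Matrix.mul_apply, Fin.sum_univ_two,
        Matrix.single, Matrix.one_apply, Matrix.diagonal]
  have hMQ : M * Q ∈ G := by
    rw [hfact]
    exact mul_mem (helem _ _ _ _) (hdiag _ _)
  have : M = (M * Q) * Q⁻¹ := by rw [mul_inv_cancel_right]
  rw [this]
  exact mul_mem hMQ (inv_mem hQ)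
end

section
/- Let R be a commutative Bézout domain that has the IP₂ property (every 2×2 matrix with determinant 0 is a product of idempotent matrices) and the GE₂ property (every invertible 2×2 matrix is a product of elementary matrices and diagonal matrices with unit diagonal entries). Then for every positive integer n, every n×n matrix over R with determinant 0 is a product of idempotent matrices. -/
namespace IPaux


variable {R : Type*} [CommRing R]

/-- `A` is a product of idempotent matrices. -/
def IP {m : Type*} [Fintype m] [DecidableEq m] (A : Matrix m m R) : Prop :=
  ∃ l : List (Matrix m m R), (∀ E ∈ l, E * E = E) ∧ A = l.prod

section basic

variable {m : Type*} [Fintype m] [DecidableEq m]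

lemma IP.idem {A : Matrix m m R} (h : A * A = A) : IP A :=
  ⟨[A], by simpa using h, by simp⟩

lemma IP.one : IP (1 : Matrix m m R) := ⟨[], by simp, by simp⟩

lemma IP.mul {A B : Matrix m m R} (hA : IP A) (hB : IP B) : IP (A * B) := by
  obtain ⟨l₁, h₁, rfl⟩ := hA
  obtain ⟨l₂, h₂, rfl⟩ := hB
  exact ⟨l₁ ++ l₂, fun E hE => (List.mem_append.mp hE).elim (h₁ E) (h₂ E),
    (List.prod_append).symm⟩

private lemma conj_prod (u : (Matrix m m R)ˣ) (l : List (Matrix m m R)) :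
    (l.map fun E => (u : Matrix m m R) * E * (↑u⁻¹ : Matrix m m R)).prod
      = (u : Matrix m m R) * l.prod * (↑u⁻¹ : Matrix m m R) := by
  induction l with
  | nil => simp
  | cons E t ih =>
      simp only [List.map_cons, List.prod_cons, ih]
      rw [mul_assoc ((u : Matrix m m R) * E), ← mul_assoc (↑u⁻¹ : Matrix m m R),
        ← mul_assoc (↑u⁻¹ : Matrix m m R), Units.inv_mul, one_mul]
      simp only [mul_assoc]

lemma IP.unit_conj (u : (Matrix m m R)ˣ) {A : Matrix m m R} (hA : IP A) :
    IP ((u : Matrix m m R) * A * (↑u⁻¹ : Matrix m m R)) := by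
  obtain ⟨l, hl, rfl⟩ := hA
  refine ⟨l.map fun E => (u : Matrix m m R) * E * (↑u⁻¹ : Matrix m m R), ?_, (conj_prod u l).symm⟩
  intro E hE
  obtain ⟨F, hF, rfl⟩ := List.mem_map.mp hE
  have h := hl F hF
  calc ((u : Matrix m m R) * F * ↑u⁻¹) * ((u : Matrix m m R) * F * ↑u⁻¹)
      = (u : Matrix m m R) * (F * ((↑u⁻¹ * ↑u) * F)) * ↑u⁻¹ := by
        simp only [mul_assoc]
    _ = (u : Matrix m m R) * F * ↑u⁻¹ := by rw [Units.inv_mul, one_mul, h]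

variable {m' : Type*} [Fintype m'] [DecidableEq m']

private lemma submatrix_prod (e : m' ≃ m) (l : List (Matrix m m R)) :
    (l.map fun E => E.submatrix e e).prod = (l.prod).submatrix e e := by
  induction l with
  | nil => simp
  | cons E t ih => simp [ih, Matrix.submatrix_mul_equiv]

lemma IP.submatrix (e : m' ≃ m) {A : Matrix m m R} (hA : IP A) :
    IP (A.submatrix e e) := by
  obtain ⟨l, hl, rfl⟩ := hA
  refine ⟨l.map fun E => E.submatrix e e, ?_, (submatrix_prod e l).symm⟩
  intro E hE
  obtain ⟨F, hF, rfl⟩ := List.mem_map.mp hE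
  rw [Matrix.submatrix_mul_equiv, hl F hF]

end basic




variable {R : Type*} [CommRing R]

/-- Content extraction over a Bézout domain. -/
lemma content [IsBezout R] [IsDomain R] {m : Type*} [Fintype m] {v : m → R} (hv : v ≠ 0) :
    ∃ (c : R) (z y : m → R), c ≠ 0 ∧ (∀ i, v i = c * z i) ∧ ∑ i, y i * z i = 1 := by
  have hfg : (Ideal.span (Set.range v)).FG := Submodule.fg_span (Set.finite_range v)
  obtain ⟨c, hc⟩ := IsBezout.isPrincipal_of_FG _ hfg
  have hmem : ∀ i, v i ∈ Ideal.span {c} := by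
    intro i
    show v i ∈ Submodule.span R ({c} : Set R)
    rw [← hc]
    exact Submodule.subset_span ⟨i, rfl⟩
  choose z hz using fun i => Ideal.mem_span_singleton'.mp (hmem i)
  have hcmem : c ∈ Ideal.span (Set.range v) := by
    rw [hc]; exact Ideal.mem_span_singleton_self c
  obtain ⟨y, hy⟩ := (Submodule.mem_span_range_iff_exists_fun R).mp hcmem
  have hc0 : c ≠ 0 := by
    rintro rfl
    apply hv
    funext i
    simpa using (hz i).symm
  refine ⟨c, z, y, hc0, fun i => by rw [← hz i, mul_comm], ?_⟩
  have : c * ∑ i, y i * z i = c * 1 := by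
    rw [mul_one, Finset.mul_sum]
    calc ∑ i, c * (y i * z i) = ∑ i, y i * v i := by
          refine Finset.sum_congr rfl fun i _ => ?_
          rw [← hz i]; ring
      _ = c := by simpa [smul_eq_mul] using hy
  exact mul_left_cancel₀ hc0 this

/-- Completion of a unimodular vector to an invertible matrix (as column 0). -/
lemma complete_col_zero [IsBezout R] [IsDomain R] :
    ∀ (m : ℕ) (z y : Fin (m + 1) → R), (∑ i, y i * z i = 1) →
      ∃ Q : Matrix (Fin (m + 1)) (Fin (m + 1)) R, IsUnit Q.det ∧ ∀ p, Q p 0 = z p := by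
  intro m
  induction m with
  | zero =>
      intro z y h
      refine ⟨Matrix.of fun _ _ => z 0, ?_, fun p => by simp [Fin.fin_one_eq_zero p]⟩
      rw [Matrix.det_fin_one]
      exact IsUnit.of_mul_eq_one (y 0) (by simpa [mul_comm] using h)
  | succ m ih =>
      intro z y h
      set zt : Fin (m + 1) → R := fun i => z i.succ with hzt_def
      by_cases hzt : zt = 0
      · -- tail is zero, z 0 is a unit
        have h1 : y 0 * z 0 = 1 := by
          rw [Fin.sum_univ_succ] at h
          have h2 : ∑ i : Fin (m + 1), y i.succ * z i.succ = 0 := by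
            refine Finset.sum_eq_zero fun i _ => ?_
            have h3 : zt i = 0 := by rw [hzt]; rfl
            rw [hzt_def] at h3
            simp only at h3
            rw [h3, mul_zero]
          rwa [h2, add_zero] at h
        refine ⟨Matrix.diagonal (fun i => if i = 0 then z 0 else 1), ?_, ?_⟩
        · rw [Matrix.det_diagonal]
          refine IsUnit.of_mul_eq_one (y 0) ?_
          rw [Finset.prod_eq_single (0 : Fin (m + 2)) (fun i _ hi => if_neg hi) (by simp)]
          simpa [mul_comm] using h1
        · intro p
          rcases eq_or_ne p 0 with rfl | hp
          · simp [Matrix.diagonal]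
          · have hzp : z p = 0 := by
              obtain ⟨p', rfl⟩ := Fin.exists_succ_eq.mpr hp
              have h4 : zt p' = 0 := by rw [hzt]; rfl
              simpa [hzt_def] using h4
            simp [Matrix.diagonal_apply_ne _ hp, hzp]
      · -- tail nonzero: extract content and use IH
        obtain ⟨c, z', y', hc0, hcz, hyz'⟩ := content hzt
        obtain ⟨Q', hQ'det, hQ'col⟩ := ih z' y' hyz'
        set a : R := y 0 with ha_def
        set b : R := ∑ i : Fin (m + 1), y i.succ * z' i with hb_def
        have hab : a * z 0 + b * c = 1 := by
          rw [Fin.sum_univ_succ] at h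
          have h5 : ∑ i : Fin (m + 1), y i.succ * z i.succ = c * b := by
            rw [hb_def, Finset.mul_sum]
            refine Finset.sum_congr rfl fun i _ => ?_
            have h6 : z i.succ = c * z' i := hcz i
            rw [h6]; ring
          rw [h5] at h
          rw [← h]; ring
        set Q : Matrix (Fin (m + 2)) (Fin (m + 2)) R := Matrix.of fun p q =>
          Fin.cases
            (Fin.cases (z 0) (fun q' => if q' = 0 then -b else 0) q)
            (fun p' => Fin.cases (c * z' p')
              (fun q' => if q' = 0 then a * z' p' else Q' p' q') q) p with hQ_def
        have hQ00 : Q 0 0 = z 0 := rfl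
        have hQrow0 : ∀ q' : Fin (m + 1), Q 0 q'.succ = if q' = 0 then -b else 0 := by
          intro q'
          simp only [hQ_def, Matrix.of_apply, Fin.cases_zero, Fin.cases_succ]
        have hQc : ∀ p' : Fin (m + 1), Q p'.succ 0 = c * z' p' := by
          intro p'
          simp only [hQ_def, Matrix.of_apply, Fin.cases_succ, Fin.cases_zero]
        have hQe : ∀ p' q' : Fin (m + 1),
            Q p'.succ q'.succ = if q' = 0 then a * z' p' else Q' p' q' := by
          intro p' q'
          simp only [hQ_def, Matrix.of_apply, Fin.cases_succ]
        -- the two relevant minors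
        have hsub0 : Q.submatrix Fin.succ ((0 : Fin (m+2)).succAbove) =
            Q'.updateCol 0 (fun p' => a * z' p') := by
          ext p' q'
          rw [Matrix.submatrix_apply, Fin.succAbove_zero, hQe p' q']
          rcases eq_or_ne q' 0 with rfl | hq'
          · rw [if_pos rfl, Matrix.updateCol_self]
          · rw [if_neg hq', Matrix.updateCol_ne hq']
        have hsub1 : Q.submatrix Fin.succ ((1 : Fin (m+2)).succAbove) =
            Q'.updateCol 0 (fun p' => c * z' p') := by
          ext p' q'
          rw [Matrix.submatrix_apply]
          rcases Fin.eq_zero_or_eq_succ q' with rfl | ⟨q'', rfl⟩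
          · have hsa : (1 : Fin (m+2)).succAbove 0 = 0 := by
              rw [Fin.succAbove_of_castSucc_lt]
              · rfl
              · simp [Fin.lt_def]
            rw [hsa, hQc, Matrix.updateCol_self]
          · have hsa : (1 : Fin (m+2)).succAbove q''.succ = q''.succ.succ := by
              rw [Fin.succAbove_of_le_castSucc]
              simp [Fin.le_def]
            rw [hsa, hQe, if_neg (Fin.succ_ne_zero q''),
              Matrix.updateCol_ne (Fin.succ_ne_zero q'')]
        have hdet : Q.det = Q'.det := by
          rw [Matrix.det_succ_row_zero, Fin.sum_univ_succ, Fin.sum_univ_succ]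
          have hthird : ∀ i : Fin m,
              ((-1 : R) ^ ((i.succ.succ : Fin (m+2)) : ℕ) * Q 0 i.succ.succ *
                (Q.submatrix Fin.succ (Fin.succAbove i.succ.succ)).det) = 0 := by
            intro i
            rw [hQrow0, if_neg (Fin.succ_ne_zero i)]
            ring
          rw [Finset.sum_eq_zero fun i _ => hthird i, add_zero]
          have e0 : Q 0 0 = z 0 := hQ00
          have e1 : Q 0 (Fin.succ 0) = -b := by rw [hQrow0, if_pos rfl]
          rw [e0, e1, hsub0]
          have : Q.submatrix Fin.succ (Fin.succAbove (Fin.succ (0 : Fin (m+1)))) =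
              Q'.updateCol 0 (fun p' => c * z' p') := by
            rw [Fin.succ_zero_eq_one]; exact hsub1
          rw [this]
          have hu0 : (Q'.updateCol 0 fun p' => a * z' p').det = a * Q'.det := by
            have : (fun p' => a * z' p') = a • z' := by funext p'; simp
            rw [this, Matrix.det_updateCol_smul]
            congr 1
            rw [show z' = fun p' => Q' p' 0 from funext fun p' => (hQ'col p').symm]
            rw [Matrix.updateCol_eq_self]
          have hu1 : (Q'.updateCol 0 fun p' => c * z' p').det = c * Q'.det := by
            have : (fun p' => c * z' p') = c • z' := by funext p'; simp
            rw [this, Matrix.det_updateCol_smul]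
            congr 1
            rw [show z' = fun p' => Q' p' 0 from funext fun p' => (hQ'col p').symm]
            rw [Matrix.updateCol_eq_self]
          rw [hu0, hu1]
          simp only [Fin.val_zero, pow_zero, Fin.val_succ, pow_one, one_mul]
          linear_combination Q'.det * hab
        refine ⟨Q, hdet ▸ hQ'det, ?_⟩
        intro p
        rcases Fin.eq_zero_or_eq_succ p with rfl | ⟨p', rfl⟩
        · exact hQ00
        · rw [hQc]
          exact (hcz p').symm

/-- Completion of a unimodular vector to an invertible matrix (as last column). -/
lemma complete_col_last [IsBezout R] [IsDomain R] (m : ℕ) (z y : Fin (m + 1) → R)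
    (h : ∑ i, y i * z i = 1) :
    ∃ Q : Matrix (Fin (m + 1)) (Fin (m + 1)) R, IsUnit Q.det ∧
      ∀ p, Q p (Fin.last m) = z p := by
  obtain ⟨Q0, hQ0det, hQ0col⟩ := complete_col_zero m z y h
  set e := Equiv.swap (0 : Fin (m + 1)) (Fin.last m) with he
  refine ⟨Q0.submatrix id ⇑e, ?_, ?_⟩
  · rw [Matrix.det_permute' e Q0]
    refine IsUnit.mul ?_ hQ0det
    rcases Int.units_eq_one_or (Equiv.Perm.sign e) with hs | hs <;> rw [hs] <;> simp
  · intro p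
    rw [Matrix.submatrix_apply, id_eq, he, Equiv.swap_apply_right]
    exact hQ0col p




variable {R : Type*} [CommRing R]

/-- Embed a `k×k` matrix as the top-left block, with a `1` in the bottom-right corner. -/
def emb {k : ℕ} (B : Matrix (Fin k) (Fin k) R) : Matrix (Fin (k + 1)) (Fin (k + 1)) R :=
  Matrix.of fun p q =>
    if hp : p = Fin.last k then (if q = Fin.last k then 1 else 0)
    else if hq : q = Fin.last k then 0 else B (p.castPred hp) (q.castPred hq)

lemma emb_apply_cast {k : ℕ} (B : Matrix (Fin k) (Fin k) R) (p q : Fin k) :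
    emb B p.castSucc q.castSucc = B p q := by
  have hp := (Fin.castSucc_lt_last p).ne
  have hq := (Fin.castSucc_lt_last q).ne
  simp [emb, dif_neg hp, dif_neg hq]

lemma emb_apply_last_last {k : ℕ} (B : Matrix (Fin k) (Fin k) R) :
    emb B (Fin.last k) (Fin.last k) = 1 := by simp [emb]

lemma emb_apply_last_cast {k : ℕ} (B : Matrix (Fin k) (Fin k) R) (q : Fin k) :
    emb B (Fin.last k) q.castSucc = 0 := by
  simp [emb, (Fin.castSucc_lt_last q).ne]

lemma emb_apply_cast_last {k : ℕ} (B : Matrix (Fin k) (Fin k) R) (p : Fin k) :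
    emb B p.castSucc (Fin.last k) = 0 := by
  simp [emb, (Fin.castSucc_lt_last p).ne]

lemma emb_one {k : ℕ} : emb (1 : Matrix (Fin k) (Fin k) R) = 1 := by
  ext p q
  rcases eq_or_ne p (Fin.last k) with rfl | hp
  · rcases eq_or_ne q (Fin.last k) with rfl | hq
    · simp [emb]
    · simp [emb, hq, (Ne.symm hq), Matrix.one_apply]
  · rcases eq_or_ne q (Fin.last k) with rfl | hq
    · simp [emb, hp, Matrix.one_apply, hp]
    · simp only [emb, Matrix.of_apply, dif_neg hp, dif_neg hq]
      rw [Matrix.one_apply, Matrix.one_apply]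
      congr 1
      simp [Fin.castPred_inj]

lemma emb_mul {k : ℕ} (B C : Matrix (Fin k) (Fin k) R) :
    emb (B * C) = emb B * emb C := by
  ext p q
  rw [Matrix.mul_apply, Fin.sum_univ_castSucc]
  rcases eq_or_ne p (Fin.last k) with rfl | hp
  · rcases eq_or_ne q (Fin.last k) with rfl | hq
    · simp [emb_apply_last_cast, emb_apply_last_last]
    · obtain ⟨q', rfl⟩ := Fin.exists_castSucc_eq.mpr hq
      simp [emb_apply_last_cast, emb_apply_last_last, emb_apply_cast_last]
  · obtain ⟨p', rfl⟩ := Fin.exists_castSucc_eq.mpr hp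
    rcases eq_or_ne q (Fin.last k) with rfl | hq
    · simp [emb_apply_cast_last, emb_apply_cast, emb_apply_last_last]
    · obtain ⟨q', rfl⟩ := Fin.exists_castSucc_eq.mpr hq
      simp only [emb_apply_cast, emb_apply_cast_last, emb_apply_last_cast, zero_mul, mul_zero,
        add_zero]
      rw [Matrix.mul_apply]



lemma emb_prod {k : ℕ} (l : List (Matrix (Fin k) (Fin k) R)) :
    (l.map emb).prod = emb l.prod := by
  induction l with
  | nil => simp [emb_one]
  | cons E t ih => simp [List.prod_cons, emb_mul, ih]

lemma IP.emb' {k : ℕ} {B : Matrix (Fin k) (Fin k) R} (hB : IP B) : IP (emb B) := by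
  obtain ⟨l, hl, rfl⟩ := hB
  refine ⟨l.map emb, ?_, (emb_prod l).symm⟩
  intro E hE
  obtain ⟨F, hF, rfl⟩ := List.mem_map.mp hE
  rw [← emb_mul, hl F hF]

/-- The key reduction: a matrix with zero last column admitting a left-kernel vector
vanishing at some coordinate `j ≠ last` is a product of idempotents, given the
inductive hypothesis one size down. -/
lemma core [IsDomain R] {k : ℕ}
    (IH : ∀ B : Matrix (Fin (k + 1)) (Fin (k + 1)) R, B.det = 0 → IP B)
    (A : Matrix (Fin (k + 2)) (Fin (k + 2)) R)
    (hcol : ∀ p, A p (Fin.last (k + 1)) = 0)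
    (lam : Fin (k + 2) → R) (j : Fin (k + 2)) (hj : j ≠ Fin.last (k + 1))
    (hlamA : Matrix.vecMul lam A = 0) (hlamj : lam j = 0) (hlam : lam ≠ 0) :
    IP A := by
  set l : Fin (k + 2) := Fin.last (k + 1) with hl
  have hjl : j ≠ l := hj
  set X : Matrix (Fin (k+2)) (Fin (k+2)) R :=
    1 - Matrix.single l l 1 + Matrix.single l j 1 with hX_def
  set Y : Matrix (Fin (k+2)) (Fin (k+2)) R :=
    1 - Matrix.single j j 1 + Matrix.single j l 1 with hY_def
  have hne1 : Matrix.single l j (1:R) * Matrix.single l l 1 = 0 :=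
    Matrix.single_mul_single_of_ne 1 _ _ _ hjl 1
  have hne2 : Matrix.single l j (1:R) * Matrix.single l j 1 = 0 :=
    Matrix.single_mul_single_of_ne 1 _ _ _ hjl 1
  have hne3 : Matrix.single j j (1:R) * Matrix.single l l 1 = 0 :=
    Matrix.single_mul_single_of_ne 1 _ _ _ hjl 1
  have hne4 : Matrix.single j j (1:R) * Matrix.single l j 1 = 0 :=
    Matrix.single_mul_single_of_ne 1 _ _ _ hjl 1
  have hXX : X * X = X := by
    rw [hX_def]
    simp only [sub_mul, mul_sub, add_mul, mul_add, one_mul, mul_one,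
      Matrix.single_mul_single_same, hne1, hne2]
    abel
  have hYX : Y * X = X := by
    rw [hY_def, hX_def]
    simp only [sub_mul, mul_sub, add_mul, mul_add, one_mul, mul_one,
      Matrix.single_mul_single_same, hne1, hne2, hne3, hne4]
    abel
  have hAstd : ∀ q : Fin (k+2), A * Matrix.single l q (1:R) = 0 := by
    intro q
    ext p q'
    rcases eq_or_ne q' q with rfl | hne
    · rw [Matrix.mul_single_apply_same, hcol, zero_mul, Matrix.zero_apply]
    · rw [Matrix.mul_single_apply_of_ne (hbj := hne), Matrix.zero_apply]
  have hAX : A * X = A := by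
    rw [hX_def, mul_add, mul_sub, mul_one, hAstd l, hAstd j, sub_zero, add_zero]
  set M : Matrix (Fin (k+2)) (Fin (k+2)) R := A * Y with hM_def
  have hMX : M * X = A := by rw [hM_def, mul_assoc, hYX, hAX]
  have hMcolj : ∀ p, M p j = 0 := by
    intro p
    rw [hM_def, hY_def, mul_add, mul_sub, mul_one, Matrix.add_apply, Matrix.sub_apply]
    rw [Matrix.mul_single_apply_same,
      Matrix.mul_single_apply_of_ne (hbj := hjl)]
    ring
  have hlamM : Matrix.vecMul lam M = 0 := by
    rw [hM_def, ← Matrix.vecMul_vecMul, hlamA, Matrix.zero_vecMul]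
  set e : Equiv.Perm (Fin (k+2)) := Equiv.swap j l with he
  set Mt : Matrix (Fin (k+2)) (Fin (k+2)) R := M.submatrix ⇑e ⇑e with hMt_def
  have hMt_inv : Mt.submatrix ⇑e ⇑e = M := by
    rw [hMt_def, Matrix.submatrix_submatrix]
    have hee : (⇑e ∘ ⇑e) = id := by
      funext x; simp [he, Equiv.swap_apply_self]
    rw [hee, Matrix.submatrix_id_id]
  have hMtcol : ∀ p, Mt p l = 0 := by
    intro p
    rw [hMt_def, Matrix.submatrix_apply]
    rw [show e l = j from by rw [he]; exact Equiv.swap_apply_right j l]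
    exact hMcolj (e p)
  set Bt : Matrix (Fin (k+1)) (Fin (k+1)) R := Mt.submatrix Fin.castSucc Fin.castSucc
    with hBt_def
  set lam' : Fin (k+1) → R := fun i => lam (e i.castSucc) with hlam'_def
  have hlam'Bt : Matrix.vecMul lam' Bt = 0 := by
    funext l'
    have expand : Matrix.vecMul lam' Bt l' = ∑ i, lam' i * Bt i l' := by
      simp [Matrix.vecMul, dotProduct]
    rw [expand]
    set g : Fin (k+2) → R := fun i => lam i * M i (e l'.castSucc) with hg_def
    have hg_sum : ∑ i, g i = 0 := by
      have h7 := congrFun hlamM (e l'.castSucc)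
      simpa [Matrix.vecMul, dotProduct, hg_def] using h7
    have hswap : ∑ i, g (e i) = ∑ i, g i := Equiv.sum_comp e g
    have hsplit : ∑ i : Fin (k+2), g (e i)
        = (∑ i : Fin (k+1), g (e i.castSucc)) + g (e l) :=
      Fin.sum_univ_castSucc (f := fun i => g (e i))
    have hgel : g (e l) = 0 := by
      rw [show e l = j from by rw [he]; exact Equiv.swap_apply_right j l]
      simp [hg_def, hlamj]
    have hmain : ∑ i : Fin (k+1), g (e i.castSucc) = 0 := by
      have := hsplit.symm.trans hswap
      rw [hgel, add_zero] at this
      rw [this, hg_sum]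
    rw [Pi.zero_apply, ← hmain]
    refine Finset.sum_congr rfl fun i _ => ?_
    rw [hlam'_def, hg_def, hBt_def, Matrix.submatrix_apply, hMt_def, Matrix.submatrix_apply]
  have hlam'0 : lam' ≠ 0 := by
    obtain ⟨i, hi⟩ := Function.ne_iff.mp hlam
    have hij : i ≠ j := by
      intro hh; exact hi (by rw [hh, hlamj]; rfl)
    have hei : e i ≠ l := by
      intro hh
      apply hij
      have h8 : e (e i) = e l := congrArg e hh
      rw [Equiv.swap_apply_self] at h8
      rw [h8, he]
      exact Equiv.swap_apply_right j l
    obtain ⟨i₀, hi₀⟩ := Fin.exists_castSucc_eq.mpr hei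
    intro h0
    apply hi
    have h9 := congrFun h0 i₀
    rw [hlam'_def] at h9
    simp only [Pi.zero_apply] at h9 ⊢
    rw [hi₀, Equiv.swap_apply_self] at h9
    exact h9
  have hdetBt : Bt.det = 0 :=
    Matrix.exists_vecMul_eq_zero_iff.mp ⟨lam', hlam'0, hlam'Bt⟩
  have hIPBt : IP Bt := IH Bt hdetBt
  set X₃ : Matrix (Fin (k+2)) (Fin (k+2)) R := (1 : Matrix (Fin (k+2)) (Fin (k+2)) R).updateRow l (Mt l)
    with hX₃_def
  have hMtll : Mt l l = 0 := hMtcol l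
  have hX₃row_l : X₃ l = Mt l := by rw [hX₃_def, Matrix.updateRow_self]
  have hX₃row_ne : ∀ p, p ≠ l → X₃ p = (1 : Matrix (Fin (k+2)) (Fin (k+2)) R) p := by
    intro p hp; rw [hX₃_def, Matrix.updateRow_ne hp]
  have hX₃ : X₃ * X₃ = X₃ := by
    ext p q
    rw [Matrix.mul_apply]
    rcases eq_or_ne p l with rfl | hp
    · have hterm : ∀ kk, X₃ l kk * X₃ kk q
          = Mt l kk * (1 : Matrix (Fin (k+2)) (Fin (k+2)) R) kk q := by
        intro kk
        rw [congrFun hX₃row_l kk]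
        rcases eq_or_ne kk l with rfl | hkk
        · rw [hMtll, zero_mul, zero_mul]
        · rw [congrFun (hX₃row_ne kk hkk) q]
      rw [Finset.sum_congr rfl fun kk _ => hterm kk]
      have h10 : (Mt * (1 : Matrix (Fin (k+2)) (Fin (k+2)) R)) l q
          = ∑ kk, Mt l kk * (1 : Matrix (Fin (k+2)) (Fin (k+2)) R) kk q := Matrix.mul_apply
      rw [← h10, mul_one, congrFun hX₃row_l q]
    · have hterm : ∀ kk, X₃ p kk * X₃ kk q
          = (1 : Matrix (Fin (k+2)) (Fin (k+2)) R) p kk * X₃ kk q := by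
        intro kk
        rw [congrFun (hX₃row_ne p hp) kk]
      rw [Finset.sum_congr rfl fun kk _ => hterm kk]
      have h11 : ((1 : Matrix (Fin (k+2)) (Fin (k+2)) R) * X₃) p q
          = ∑ kk, (1 : Matrix (Fin (k+2)) (Fin (k+2)) R) p kk * X₃ kk q := Matrix.mul_apply
      rw [← h11, one_mul]
  have hfact : Mt = emb Bt * X₃ := by
    ext p q
    rw [Matrix.mul_apply, Fin.sum_univ_castSucc]
    rcases eq_or_ne p l with rfl | hp
    · have hzero : ∀ i : Fin (k+1), emb Bt l (Fin.castSucc i) * X₃ (Fin.castSucc i) q = 0 := by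
        intro i
        rw [show emb Bt l (Fin.castSucc i) = 0 from emb_apply_last_cast Bt i, zero_mul]
      rw [Finset.sum_eq_zero fun i _ => hzero i, zero_add,
        show emb Bt l l = 1 from emb_apply_last_last Bt, one_mul, congrFun hX₃row_l q]
    · obtain ⟨p', rfl⟩ := Fin.exists_castSucc_eq.mpr hp
      rw [show emb Bt (Fin.castSucc p') l = 0 from emb_apply_cast_last Bt p', zero_mul, add_zero]
      have hterm : ∀ i : Fin (k+1), emb Bt (Fin.castSucc p') (Fin.castSucc i) * X₃ (Fin.castSucc i) q
          = Mt (Fin.castSucc p') (Fin.castSucc i) * (1 : Matrix (Fin (k+2)) (Fin (k+2)) R) (Fin.castSucc i) q := by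
        intro i
        rw [emb_apply_cast, congrFun (hX₃row_ne _ (Fin.castSucc_lt_last i).ne) q]
        rfl
      rw [Finset.sum_congr rfl fun i _ => hterm i]
      rcases eq_or_ne q l with rfl | hq
      · have : ∀ i : Fin (k+1), Mt (Fin.castSucc p') (Fin.castSucc i)
            * (1 : Matrix (Fin (k+2)) (Fin (k+2)) R) (Fin.castSucc i) l = 0 := by
          intro i
          rw [Matrix.one_apply_ne (Fin.castSucc_lt_last i).ne, mul_zero]
        rw [Finset.sum_eq_zero fun i _ => this i, hMtcol]
      · obtain ⟨q', rfl⟩ := Fin.exists_castSucc_eq.mpr hq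
        have : ∀ i : Fin (k+1), Mt (Fin.castSucc p') (Fin.castSucc i)
            * (1 : Matrix (Fin (k+2)) (Fin (k+2)) R) (Fin.castSucc i) (Fin.castSucc q')
            = if i = q' then Mt (Fin.castSucc p') (Fin.castSucc i) else 0 := by
          intro i
          rcases eq_or_ne i q' with rfl | hiq
          · rw [Matrix.one_apply_eq, mul_one, if_pos rfl]
          · rw [Matrix.one_apply_ne (by simpa [Fin.castSucc_inj] using hiq), mul_zero, if_neg hiq]
        rw [Finset.sum_congr rfl fun i _ => this i, Finset.sum_ite_eq' Finset.univ q']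
        simp
  have hIPMt : IP Mt := by
    rw [hfact]
    exact (IP.emb' hIPBt).mul (IP.idem hX₃)
  have hIPM : IP M := by
    rw [← hMt_inv]
    exact IP.submatrix e hIPMt
  have : IP (M * X) := hIPM.mul (IP.idem hXX)
  rwa [hMX] at this

lemma step [IsDomain R] [IsBezout R] {k : ℕ} (hk : 0 < k)
    (IH : ∀ B : Matrix (Fin (k + 1)) (Fin (k + 1)) R, B.det = 0 → IP B)
    (A : Matrix (Fin (k + 2)) (Fin (k + 2)) R) (hA : A.det = 0) : IP A := by
  have h01 : (0 : Fin (k+1)) ≠ 1 := by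
    intro h
    have h' := congrArg Fin.val h
    rw [Fin.val_zero, Fin.val_one'] at h'
    rw [Nat.mod_eq_of_lt (by omega)] at h'
    omega
  -- kernel vector, made unimodular
  obtain ⟨v, hv0, hAv⟩ := Matrix.exists_mulVec_eq_zero_iff.mpr hA
  obtain ⟨c, z, y, hc0, hcz, hyz⟩ := content hv0
  have hAz : A.mulVec z = 0 := by
    have h1 : A.mulVec v = c • A.mulVec z := by
      rw [show v = c • z from funext fun i => by
        rw [Pi.smul_apply, smul_eq_mul]; exact hcz i]
      rw [Matrix.mulVec_smul]
    funext p
    have h2 := congrFun (h1.symm.trans hAv) p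
    simp only [Pi.smul_apply, smul_eq_mul, Pi.zero_apply] at h2
    rcases mul_eq_zero.mp h2 with h | h
    · exact absurd h hc0
    · simpa using h
  obtain ⟨Q, hQdet, hQcol⟩ :=
    (show ∃ Q : Matrix (Fin (k+2)) (Fin (k+2)) R, IsUnit Q.det ∧
        ∀ p, Q p (Fin.last (k+1)) = z p from complete_col_last (k+1) z y hyz)
  have hQunit : IsUnit Q := (Matrix.isUnit_iff_isUnit_det Q).mpr hQdet
  set Qu := hQunit.unit with hQu
  have hQuval : (Qu : Matrix (Fin (k+2)) (Fin (k+2)) R) = Q := rfl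
  set Qi : Matrix (Fin (k+2)) (Fin (k+2)) R := ↑Qu⁻¹ with hQi
  have hQQi : Q * Qi = 1 := by rw [hQi, ← hQuval, Units.mul_inv]
  have hQiQ : Qi * Q = 1 := by rw [hQi, ← hQuval, Units.inv_mul]
  set A₁ : Matrix (Fin (k+2)) (Fin (k+2)) R := Qi * A * Q with hA₁
  have transport : IP A₁ → IP A := by
    intro h
    have h5 := IP.unit_conj Qu h
    rw [hQuval, ← hQi] at h5
    have hback : Q * A₁ * Qi = A := by
      rw [hA₁]
      simp only [← mul_assoc]
      rw [hQQi, one_mul, mul_assoc, hQQi, mul_one]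
    rwa [hback] at h5
  have hA₁col : ∀ p, A₁ p (Fin.last (k+1)) = 0 := by
    intro p
    have h3 : A₁ p (Fin.last (k+1)) = ((Qi * A).mulVec z) p := by
      rw [hA₁, Matrix.mul_apply]
      simp only [Matrix.mulVec, dotProduct]
      refine Finset.sum_congr rfl fun i _ => ?_
      rw [hQcol]
    rw [h3, ← Matrix.mulVec_mulVec, hAz, Matrix.mulVec_zero, Pi.zero_apply]
  have hA₁det : A₁.det = 0 := by
    rw [hA₁]
    simp [Matrix.det_mul, hA]
  obtain ⟨w, hw0, hwA₁⟩ := Matrix.exists_vecMul_eq_zero_iff.mpr hA₁det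
  set j : Fin (k+2) := Fin.castSucc 1 with hj_def
  have hjne : j ≠ Fin.last (k+1) := (Fin.castSucc_lt_last 1).ne
  set w' : Fin (k+1) → R := fun i => w i.castSucc with hw'
  by_cases hw'0 : w' = 0
  · refine transport (core IH A₁ hA₁col w j hjne hwA₁ ?_ hw0)
    exact congrFun hw'0 1
  · obtain ⟨c', w'', y'', hc'0, hc'w, hy''⟩ := content hw'0
    obtain ⟨Qc, hQcdet, hQccol⟩ := complete_col_zero k w'' y'' hy''
    have hPdet : IsUnit (Qc.transpose).det := by
      rw [Matrix.det_transpose]; exact hQcdet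
    have hPunit : IsUnit Qc.transpose := (Matrix.isUnit_iff_isUnit_det _).mpr hPdet
    set Pu := hPunit.unit with hPu
    have hrow0 : ∀ q : Fin (k+1), (↑Pu : Matrix (Fin (k+1)) (Fin (k+1)) R) 0 q = w'' q := by
      intro q
      show Qc.transpose 0 q = _
      rw [Matrix.transpose_apply]
      exact hQccol q
    set Wv : Matrix (Fin (k+2)) (Fin (k+2)) R :=
      emb (↑Pu : Matrix (Fin (k+1)) (Fin (k+1)) R) with hWv
    set Wi : Matrix (Fin (k+2)) (Fin (k+2)) R :=
      emb (↑Pu⁻¹ : Matrix (Fin (k+1)) (Fin (k+1)) R) with hWi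
    have hWvWi : Wv * Wi = 1 := by rw [hWv, hWi, ← emb_mul, Units.mul_inv, emb_one]
    have hWiWv : Wi * Wv = 1 := by rw [hWv, hWi, ← emb_mul, Units.inv_mul, emb_one]
    set Wu : (Matrix (Fin (k+2)) (Fin (k+2)) R)ˣ := ⟨Wv, Wi, hWvWi, hWiWv⟩ with hWu
    have hWuval : (↑Wu : Matrix (Fin (k+2)) (Fin (k+2)) R) = Wv := rfl
    have hWuinv : (↑Wu⁻¹ : Matrix (Fin (k+2)) (Fin (k+2)) R) = Wi := rfl
    set A₂ : Matrix (Fin (k+2)) (Fin (k+2)) R := Wv * A₁ * Wi with hA₂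
    have hA₂col : ∀ p, A₂ p (Fin.last (k+1)) = 0 := by
      intro p
      rw [hA₂, Matrix.mul_apply]
      have hterm : ∀ kk, (Wv * A₁) p kk * Wi kk (Fin.last (k+1))
          = if kk = Fin.last (k+1) then (Wv * A₁) p kk else 0 := by
        intro kk
        rcases eq_or_ne kk (Fin.last (k+1)) with rfl | hkk
        · rw [hWi, emb_apply_last_last, mul_one, if_pos rfl]
        · obtain ⟨kk', rfl⟩ := Fin.exists_castSucc_eq.mpr hkk
          rw [hWi, emb_apply_cast_last, mul_zero, if_neg hkk]
      rw [Finset.sum_congr rfl fun kk _ => hterm kk,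
        Finset.sum_ite_eq' Finset.univ (Fin.last (k+1))]
      rw [if_pos (Finset.mem_univ _), Matrix.mul_apply]
      exact Finset.sum_eq_zero fun i _ => by rw [hA₁col, mul_zero]
    set lam : Fin (k+2) → R := Matrix.vecMul w Wi with hlam_def
    have hlamA₂ : Matrix.vecMul lam A₂ = 0 := by
      have h1 : Matrix.vecMul lam Wv = w := by
        rw [hlam_def, Matrix.vecMul_vecMul, hWiWv, Matrix.vecMul_one]
      rw [hA₂, ← Matrix.vecMul_vecMul, ← Matrix.vecMul_vecMul, h1, hwA₁, Matrix.zero_vecMul]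
    have hkey : ∀ q' : Fin (k+1), lam (Fin.castSucc q')
        = c' * (1 : Matrix (Fin (k+1)) (Fin (k+1)) R) 0 q' := by
      intro q'
      have expand : lam (Fin.castSucc q')
          = ∑ i, w i * (emb (↑Pu⁻¹ : Matrix (Fin (k+1)) (Fin (k+1)) R)) i (Fin.castSucc q') := by
        rw [hlam_def, hWi]
        simp [Matrix.vecMul, dotProduct]
      rw [expand, Fin.sum_univ_castSucc, emb_apply_last_cast, mul_zero, add_zero]
      have hterm : ∀ i' : Fin (k+1),
          w (Fin.castSucc i') * emb (↑Pu⁻¹ : Matrix (Fin (k+1)) (Fin (k+1)) R)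
            (Fin.castSucc i') (Fin.castSucc q')
          = c' * (w'' i' * (↑Pu⁻¹ : Matrix (Fin (k+1)) (Fin (k+1)) R) i' q') := by
        intro i'
        rw [emb_apply_cast]
        rw [show w (Fin.castSucc i') = c' * w'' i' from hc'w i']
        ring
      rw [Finset.sum_congr rfl fun i' _ => hterm i', ← Finset.mul_sum]
      congr 1
      have h2 : ∑ i', w'' i' * (↑Pu⁻¹ : Matrix (Fin (k+1)) (Fin (k+1)) R) i' q'
          = ∑ i', (↑Pu : Matrix (Fin (k+1)) (Fin (k+1)) R) 0 i'
            * (↑Pu⁻¹ : Matrix (Fin (k+1)) (Fin (k+1)) R) i' q' :=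
        Finset.sum_congr rfl fun i' _ => by rw [hrow0]
      have h3 : ((↑Pu : Matrix (Fin (k+1)) (Fin (k+1)) R)
          * (↑Pu⁻¹ : Matrix (Fin (k+1)) (Fin (k+1)) R)) 0 q'
          = ∑ i', (↑Pu : Matrix (Fin (k+1)) (Fin (k+1)) R) 0 i'
            * (↑Pu⁻¹ : Matrix (Fin (k+1)) (Fin (k+1)) R) i' q' := Matrix.mul_apply
      rw [h2, ← h3, Units.mul_inv]
    have hlamj : lam j = 0 := by
      rw [hj_def, hkey, Matrix.one_apply_ne h01, mul_zero]
    have hlam0 : lam ≠ 0 := by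
      intro h0
      apply hc'0
      have h4 := congrFun h0 (Fin.castSucc (0 : Fin (k+1)))
      rw [hkey, Matrix.one_apply_eq, mul_one, Pi.zero_apply] at h4
      exact h4
    have hIPA₂ : IP A₂ := core IH A₂ hA₂col lam j hjne hlamA₂ hlamj hlam0
    have h4 := IP.unit_conj Wu⁻¹ hIPA₂
    rw [inv_inv] at h4
    have hcoe : (↑Wu⁻¹ : Matrix (Fin (k+2)) (Fin (k+2)) R) * A₂
        * (↑Wu : Matrix (Fin (k+2)) (Fin (k+2)) R) = Wi * A₂ * Wv := by
      rw [hWuval, hWuinv]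
    rw [hcoe] at h4
    have hback : Wi * A₂ * Wv = A₁ := by
      rw [hA₂]
      simp only [← mul_assoc]
      rw [hWiWv, one_mul, mul_assoc, hWiWv, mul_one]
    rw [hback] at h4
    exact transport h4

theorem main [IsDomain R] [IsBezout R]
    (hIP2 : ∀ A : Matrix (Fin 2) (Fin 2) R, A.det = 0 →
      ∃ l : List (Matrix (Fin 2) (Fin 2) R), (∀ E ∈ l, E * E = E) ∧ A = l.prod) :
    ∀ (n : ℕ) (A : Matrix (Fin (n + 1)) (Fin (n + 1)) R), A.det = 0 → IP A := by
  intro n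
  induction n with
  | zero =>
      intro A hA
      have hA0 : A = 0 := by
        ext i jj
        have hi : i = 0 := Fin.fin_one_eq_zero i
        have hj : jj = 0 := Fin.fin_one_eq_zero jj
        rw [hi, hj, Matrix.zero_apply, ← Matrix.det_fin_one A, hA]
      rw [hA0]
      exact IP.idem (by rw [mul_zero])
  | succ n ih =>
      rcases n with _ | k
      · intro A hA
        exact hIP2 A hA
      · intro A hA
        exact step k.succ_pos ih A hA

end IPaux

/-- A commutative Bézout domain with the IP₂ and GE₂ properties has the IP
property: every singular `n × n` matrix is a product of idempotent matrices. -/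
theorem IP_of_bezout_IP2_GE2
    (R : Type*) [CommRing R] [IsDomain R] [IsBezout R]
    (hIP2 : ∀ A : Matrix (Fin 2) (Fin 2) R, A.det = 0 →
      ∃ l : List (Matrix (Fin 2) (Fin 2) R), (∀ E ∈ l, E * E = E) ∧ A = l.prod)
    (hGE2 : ∀ M : (Matrix (Fin 2) (Fin 2) R)ˣ,
      M ∈ Subgroup.closure
        {N : (Matrix (Fin 2) (Fin 2) R)ˣ |
          (∃ (i j : Fin 2) (c : R), i ≠ j ∧
            N.val = 1 + Matrix.single i j c) ∨
          (∃ u v : Rˣ,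
            N.val = Matrix.diagonal ![(u : R), (v : R)])}) :
    ∀ (n : ℕ) (A : Matrix (Fin (n + 1)) (Fin (n + 1)) R), A.det = 0 →
      ∃ l : List (Matrix (Fin (n + 1)) (Fin (n + 1)) R),
        (∀ E ∈ l, E * E = E) ∧ A = l.prod := by
  intro n A hA
  exact IPaux.main hIP2 n A hA
end
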